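/- In 2-dimensional Minkowski space the volume-distance relation holds: for a = (0,0) ≤ c = (t,x) with t ≥ |x|, the Lebesgue measure of the causal diamond J(a,c) equals (t² − x²)/2, i.e. vol(J(a,c)) = σ(a,c)²/2 where σ(a,c) = √(t² − x²) is the Lorentzian distance. -/

import Mathlib

open MeasureTheory

/-- Causal order on 2-dimensional Minkowski space, coordinates `(t, x)`. -/
def MinkLE (p q : ℝ × ℝ) : Prop := |q.2 - p.2| ≤ q.1 - p.1

/-- Causal diamond `J(p,q)`. -/
def MinkJ (p q : ℝ × ℝ) : Set (ℝ × ℝ) := {z | MinkLE p z ∧ MinkLE z q}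

noncomputable def lightCone : (ℝ × ℝ) →ₗ[ℝ] (ℝ × ℝ) :=
  LinearMap.prod (LinearMap.fst ℝ ℝ ℝ - LinearMap.snd ℝ ℝ ℝ)
    (LinearMap.fst ℝ ℝ ℝ + LinearMap.snd ℝ ℝ ℝ)

lemma lightCone_det : lightCone.det = 2 := by
  rw [← LinearMap.det_toMatrix (Module.Basis.finTwoProd ℝ), Matrix.det_fin_two]
  simp [LinearMap.toMatrix_apply, lightCone, Module.Basis.finTwoProd]
  norm_num

/-- Volume–distance relation in 2-dimensional Minkowski space:
`vol J((0,0),(t,x)) = (t² − x²)/2 = σ((0,0),(t,x))²/2`. -/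
theorem diamond_volume_eq_sigma_sq_div_two (t x : ℝ) (h : |x| ≤ t) :
    volume (MinkJ (0, 0) (t, x)) = ENNReal.ofReal ((t ^ 2 - x ^ 2) / 2) ∧
    (t ^ 2 - x ^ 2) / 2 = Real.sqrt (t ^ 2 - x ^ 2) ^ 2 / 2 := by
  have hx := abs_le.1 h
  constructor
  · have hset : MinkJ (0, 0) (t, x)
        = lightCone ⁻¹' (Set.Icc 0 (t - x) ×ˢ Set.Icc 0 (t + x)) := by
      ext z
      simp only [MinkJ, MinkLE, lightCone, Set.mem_setOf_eq, Set.mem_preimage,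
        LinearMap.prod_apply, Set.mem_prod, Set.mem_Icc, Function.prod_apply,
        LinearMap.sub_apply, LinearMap.add_apply, LinearMap.fst_apply,
        LinearMap.snd_apply, abs_le]
      constructor
      · rintro ⟨⟨h1, h2⟩, h3, h4⟩; constructor <;> constructor <;> linarith
      · rintro ⟨⟨h1, h2⟩, h3, h4⟩; refine ⟨⟨?_, ?_⟩, ?_, ?_⟩ <;> linarith
    rw [hset, Measure.addHaar_preimage_linearMap volume
      (by rw [lightCone_det]; norm_num), Measure.volume_eq_prod, Measure.prod_prod,
      Real.volume_Icc, Real.volume_Icc, lightCone_det]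
    rw [← ENNReal.ofReal_mul (by linarith), ← ENNReal.ofReal_mul (by positivity)]
    congr 1
    rw [abs_of_pos (by norm_num : (0:ℝ) < (2:ℝ)⁻¹)]
    ring
  · rw [Real.sq_sqrt]
    nlinarith [abs_nonneg x, sq_abs x]
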